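/- If λ₁, λ₂, λ₃ are complex numbers, all distinct from 1, satisfying 1/(1-λ₁) + 1/(1-λ₂) + 1/(1-λ₃) = 1, and |λ₁| < 1 and |λ₂| < 1, then Re(λ₃) > 1. -/

import Mathlib

open Complex

lemma aux_re (l : ℂ) : (1 / (1 - l)).re = (1 - l.re) / Complex.normSq (1 - l) := by
  rw [one_div, Complex.inv_re]
  simp [Complex.sub_re]

lemma aux_half (l : ℂ) (h : ‖l‖ < 1) : 1 / 2 < (1 / (1 - l)).re := by
  have hne : (1 : ℂ) - l ≠ 0 := by
    intro h0
    have : l = 1 := by linear_combination -h0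
    rw [this] at h; simp at h
  have hpos : 0 < Complex.normSq (1 - l) := Complex.normSq_pos.2 hne
  have hsq : Complex.normSq l < 1 := by
    have := Complex.sq_norm l
    nlinarith [norm_nonneg l]
  rw [aux_re, lt_div_iff₀ hpos]
  have : Complex.normSq (1 - l) = 1 - 2 * l.re + Complex.normSq l := by
    simp [Complex.normSq_apply, Complex.sub_re, Complex.sub_im]; ring
  nlinarith

theorem stmt_0 (l1 l2 l3 : ℂ) (h1 : l1 ≠ 1) (h2 : l2 ≠ 1) (h3 : l3 ≠ 1)
    (heq : 1 / (1 - l1) + 1 / (1 - l2) + 1 / (1 - l3) = 1)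
    (ha1 : ‖l1‖ < 1) (ha2 : ‖l2‖ < 1) :
    1 < l3.re := by
  have A := aux_half l1 ha1
  have B := aux_half l2 ha2
  have hre : (1 / (1 - l1)).re + (1 / (1 - l2)).re + (1 / (1 - l3)).re = 1 := by
    have := congrArg Complex.re heq
    simpa using this
  have hneg : (1 / (1 - l3)).re < 0 := by linarith
  rw [aux_re] at hneg
  have hne : (1 : ℂ) - l3 ≠ 0 := sub_ne_zero.2 (Ne.symm h3)
  have hpos : 0 < Complex.normSq (1 - l3) := Complex.normSq_pos.2 hne
  have := (div_neg_iff.1 hneg)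
  rcases this with ⟨_, h⟩ | ⟨h, _⟩
  · linarith
  · linarith
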